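/- Let n ≥ 1 and let A : Matrix (Fin n) (Fin n) ℂ have entries A i j = 0 if i = j and 1 otherwise. For all i, j : Fin n, the angle-averaged transition probability satisfies (1/(2π)) ∫_{β=0}^{2π} ‖(exp(−(i β) • A)) j i‖² dβ = 1 − 2/n + 2/n² if j = i, and = 2/n² if j ≠ i. -/

import Mathlib

set_option maxHeartbeats 1000000

open Matrix NormedSpace

lemma xyAux_J_pow (n k : ℕ) :
    (Matrix.of (fun _ _ : Fin n => (1:ℂ))) ^ (k+1) = ((n:ℂ))^k • Matrix.of (fun _ _ => 1) := by
  induction k with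
  | zero => simp
  | succ k ih =>
    rw [pow_succ, ih]
    ext a b
    simp [Matrix.mul_apply, Matrix.smul_apply, Finset.sum_const]
    ring

lemma xyAux_exp_smul_J (n : ℕ) (hn : 1 ≤ n) (c : ℂ) :
    exp (c • (Matrix.of (fun _ _ : Fin n => (1:ℂ)))) =
      1 + ((Complex.exp (c * n) - 1) / n) • Matrix.of (fun _ _ => 1) := by
  letI : SeminormedRing (Matrix (Fin n) (Fin n) ℂ) := Matrix.linftyOpSemiNormedRing
  letI : NormedRing (Matrix (Fin n) (Fin n) ℂ) := Matrix.linftyOpNormedRing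
  letI : NormedAlgebra ℂ (Matrix (Fin n) (Fin n) ℂ) := Matrix.linftyOpNormedAlgebra
  have hn0 : (n : ℂ) ≠ 0 := Nat.cast_ne_zero.mpr (by omega)
  set J : Matrix (Fin n) (Fin n) ℂ := Matrix.of (fun _ _ => 1) with hJ
  have hs : Summable (fun k : ℕ => ((k.factorial : ℂ))⁻¹ • (c • J) ^ k) :=
    NormedSpace.expSeries_summable' (𝕂 := ℂ) (c • J)
  rw [NormedSpace.exp_eq_tsum (𝕂 := ℂ)]
  beta_reduce
  rw [hs.tsum_eq_zero_add]
  have hterm : ∀ k : ℕ, (((k+1).factorial : ℂ))⁻¹ • (c • J) ^ (k+1)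
      = ((((k+1).factorial : ℂ))⁻¹ * c ^ (k+1) * (n:ℂ) ^ k) • J := by
    intro k
    rw [smul_pow, xyAux_J_pow, smul_smul, smul_smul]
  have h1 : Summable (fun k : ℕ => ((k.factorial : ℂ))⁻¹ • (c * n) ^ k) :=
    NormedSpace.expSeries_summable' (𝕂 := ℂ) (c * n)
  have h2 : Summable (fun k : ℕ => (((k+1).factorial : ℂ))⁻¹ • (c * n) ^ (k+1)) :=
    (summable_nat_add_iff 1).mpr h1
  have hf : Summable (fun k : ℕ => (((k+1).factorial : ℂ))⁻¹ * c ^ (k+1) * (n:ℂ) ^ k) := by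
    refine (h2.mul_left ((n:ℂ))⁻¹).congr fun k => ?_
    have h : (((k+1).factorial : ℂ))⁻¹ • (c * ↑n)^(k+1)
        = ((((k+1).factorial : ℂ))⁻¹ * c^(k+1) * (↑n:ℂ)^k) * ↑n := by
      rw [smul_eq_mul, mul_pow, pow_succ]; ring
    rw [h, mul_comm ((n:ℂ))⁻¹, mul_assoc, mul_inv_cancel₀ hn0, mul_one]
  simp only [pow_zero, hterm]
  rw [hf.tsum_smul_const]
  congr 1
  · simp
  · congr 1
    have hexp : Complex.exp (c * n) = ∑' k : ℕ, ((k.factorial : ℂ))⁻¹ • (c * n) ^ k := by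
      rw [Complex.exp_eq_exp_ℂ, NormedSpace.exp_eq_tsum (𝕂 := ℂ)]
    rw [hexp, h1.tsum_eq_zero_add]
    simp only [pow_zero, smul_eq_mul, mul_one, Nat.factorial_zero, Nat.cast_one, inv_one,
      add_sub_cancel_left]
    rw [← tsum_div_const]
    congr 1 with k
    rw [eq_div_iff hn0, mul_pow, pow_succ]
    ring

lemma xyAux_exp_c_smul_one (n : ℕ) (c : ℂ) :
    exp (c • (1 : Matrix (Fin n) (Fin n) ℂ)) = Complex.exp c • 1 := by
  letI : SeminormedRing (Matrix (Fin n) (Fin n) ℂ) := Matrix.linftyOpSemiNormedRing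
  letI : NormedRing (Matrix (Fin n) (Fin n) ℂ) := Matrix.linftyOpNormedRing
  letI : NormedAlgebra ℂ (Matrix (Fin n) (Fin n) ℂ) := Matrix.linftyOpNormedAlgebra
  have h1 : c • (1 : Matrix (Fin n) (Fin n) ℂ) = algebraMap ℂ _ c := by
    simp [Algebra.algebraMap_eq_smul_one]
  rw [h1]
  erw [← algebraMap_exp_comm]
  rw [Complex.exp_eq_exp_ℂ, Algebra.algebraMap_eq_smul_one]

lemma xyAux_entry_formula (n : ℕ) (hn : 1 ≤ n) (A : Matrix (Fin n) (Fin n) ℂ)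
    (hA : ∀ i j, A i j = if i = j then 0 else 1) (i j : Fin n) (β : ℝ) :
    (exp ((-(Complex.I * β)) • A)) j i =
      Complex.exp (Complex.I * β) *
        ((if j = i then 1 else 0) + (Complex.exp (-(Complex.I * β) * n) - 1) / n) := by
  have hAJ : A = Matrix.of (fun _ _ : Fin n => (1:ℂ)) - 1 := by
    ext a b
    by_cases h : a = b <;> simp [hA, Matrix.one_apply, h]
  have hsplit : (-(Complex.I * β)) • A =
      (-(Complex.I * β)) • (Matrix.of (fun _ _ : Fin n => (1:ℂ)))
        + (Complex.I * β) • (1 : Matrix (Fin n) (Fin n) ℂ) := by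
    rw [hAJ, smul_sub]
    module
  have hcomm : Commute ((-(Complex.I * β)) • (Matrix.of (fun _ _ : Fin n => (1:ℂ))))
      ((Complex.I * β) • (1 : Matrix (Fin n) (Fin n) ℂ)) :=
    ((Commute.one_right _).smul_right _).smul_left _
  rw [hsplit, Matrix.exp_add_of_commute _ _ hcomm, xyAux_exp_smul_J n hn,
    xyAux_exp_c_smul_one]
  rw [Matrix.mul_smul, Matrix.smul_apply, Matrix.mul_one,
    Matrix.add_apply, Matrix.one_apply, Matrix.smul_apply, Matrix.of_apply]
  rw [smul_eq_mul, smul_eq_mul, mul_one, mul_comm]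

lemma xyAux_norm_sq_entry (β : ℝ) (d : ℂ) :
    ‖Complex.exp (Complex.I * β) * d‖ ^ 2 = ‖d‖ ^ 2 := by
  rw [norm_mul, mul_comm Complex.I, Complex.norm_exp_ofReal_mul_I, one_mul]

lemma xyAux_norm_sq_diag (n : ℕ) (hn : 1 ≤ n) (β : ℝ) :
    ‖(1 : ℂ) + (Complex.exp (-(Complex.I * β) * n) - 1) / n‖ ^ 2 =
      (((n:ℝ)-1)^2 + 1) / (n:ℝ)^2 + (2*((n:ℝ)-1)/(n:ℝ)^2) * Real.cos (n*β) := by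
  have hn0 : (n:ℝ) ≠ 0 := Nat.cast_ne_zero.mpr (by omega)
  have hn0' : (n:ℂ) ≠ 0 := Nat.cast_ne_zero.mpr (by omega)
  set θ : ℝ := -((n:ℝ)*β) with hθ
  have h1 : -(Complex.I * ↑β) * ↑n = (↑θ : ℂ) * Complex.I := by rw [hθ]; push_cast; ring
  have hz : (1 : ℂ) + (Complex.exp (-(Complex.I * β) * n) - 1) / n =
      (↑(((n:ℝ)-1+Real.cos θ)/(n:ℝ)) : ℂ) + (↑(Real.sin θ/(n:ℝ)) : ℂ) * Complex.I := by
    rw [h1, Complex.exp_mul_I, ← Complex.ofReal_cos, ← Complex.ofReal_sin]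
    push_cast
    field_simp
    ring
  rw [hz, Complex.sq_norm, Complex.normSq_add_mul_I]
  have hc : Real.cos θ = Real.cos ((n:ℝ)*β) := by rw [hθ, Real.cos_neg]
  have hpy : Real.sin θ ^ 2 = 1 - Real.cos θ ^ 2 := by
    have := Real.sin_sq_add_cos_sq θ; linarith
  rw [div_pow, div_pow, hpy, hc]
  field_simp
  ring

lemma xyAux_norm_sq_off (n : ℕ) (hn : 1 ≤ n) (β : ℝ) :
    ‖(0 : ℂ) + (Complex.exp (-(Complex.I * β) * n) - 1) / n‖ ^ 2 =
      2/(n:ℝ)^2 + (-2/(n:ℝ)^2) * Real.cos (n*β) := by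
  have hn0 : (n:ℝ) ≠ 0 := Nat.cast_ne_zero.mpr (by omega)
  have hn0' : (n:ℂ) ≠ 0 := Nat.cast_ne_zero.mpr (by omega)
  set θ : ℝ := -((n:ℝ)*β) with hθ
  have h1 : -(Complex.I * ↑β) * ↑n = (↑θ : ℂ) * Complex.I := by rw [hθ]; push_cast; ring
  have hz : (0 : ℂ) + (Complex.exp (-(Complex.I * β) * n) - 1) / n =
      (↑((Real.cos θ - 1)/(n:ℝ)) : ℂ) + (↑(Real.sin θ/(n:ℝ)) : ℂ) * Complex.I := by
    rw [h1, Complex.exp_mul_I, ← Complex.ofReal_cos, ← Complex.ofReal_sin]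
    push_cast
    field_simp
    ring
  rw [hz, Complex.sq_norm, Complex.normSq_add_mul_I]
  have hc : Real.cos θ = Real.cos ((n:ℝ)*β) := by rw [hθ, Real.cos_neg]
  have hpy : Real.sin θ ^ 2 = 1 - Real.cos θ ^ 2 := by
    have := Real.sin_sq_add_cos_sq θ; linarith
  rw [div_pow, div_pow, hpy, hc]
  field_simp
  ring

lemma xyAux_integral_cos_nmul (n : ℕ) (hn : 1 ≤ n) :
    ∫ β in (0:ℝ)..(2*Real.pi), Real.cos ((n:ℝ)*β) = 0 := by
  have hn0 : (n:ℝ) ≠ 0 := Nat.cast_ne_zero.mpr (by omega)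
  rw [intervalIntegral.integral_comp_mul_left Real.cos hn0, mul_zero, integral_cos]
  have h2 : Real.sin ((n:ℝ)*(2*Real.pi)) = 0 := by
    rw [show (n:ℝ)*(2*Real.pi) = ((2*n : ℕ):ℝ)*Real.pi by push_cast; ring]
    exact Real.sin_nat_mul_pi (2*n)
  simp [h2]

lemma xyAux_integral_affine_cos (n : ℕ) (hn : 1 ≤ n) (a b : ℝ) :
    ∫ β in (0:ℝ)..(2*Real.pi), (a + b * Real.cos ((n:ℝ)*β)) = 2*Real.pi*a := by
  have hint : IntervalIntegrable (fun β => b * Real.cos ((n:ℝ)*β))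
      MeasureTheory.volume 0 (2*Real.pi) :=
    (continuous_const.mul
      (Real.continuous_cos.comp (continuous_const.mul continuous_id))).intervalIntegrable _ _
  rw [intervalIntegral.integral_add (intervalIntegrable_const) hint,
    intervalIntegral.integral_const, intervalIntegral.integral_const_mul,
    xyAux_integral_cos_nmul n hn]
  simp [smul_eq_mul]

/-- Angle-averaged transition probabilities of the XY mixer on the one-excitation
subspace: `(1/2π) ∫₀^{2π} |⟨e_j| e^{-iβA} |e_i⟩|² dβ` equals `1 - 2/n + 2/n²` on
the diagonal and `2/n²` off the diagonal. -/
theorem xy_mixer_angle_averaged_transition (n : ℕ) (hn : 1 ≤ n)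
    (A : Matrix (Fin n) (Fin n) ℂ)
    (hA : ∀ i j, A i j = if i = j then 0 else 1) (i j : Fin n) :
    (1 / (2 * Real.pi)) * ∫ β in (0 : ℝ)..(2 * Real.pi),
        ‖(NormedSpace.exp ((-(Complex.I * β)) • A)) j i‖ ^ 2 =
      if j = i then 1 - 2 / (n : ℝ) + 2 / (n : ℝ) ^ 2 else 2 / (n : ℝ) ^ 2 := by
  have hn0 : (n:ℝ) ≠ 0 := Nat.cast_ne_zero.mpr (by omega)
  have hpi : (2 * Real.pi) ≠ 0 := by positivity
  by_cases hji : j = i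
  · have hfun : ∀ β : ℝ, ‖(NormedSpace.exp ((-(Complex.I * β)) • A)) j i‖ ^ 2 =
        (((n:ℝ)-1)^2 + 1) / (n:ℝ)^2 + (2*((n:ℝ)-1)/(n:ℝ)^2) * Real.cos ((n:ℝ)*β) := by
      intro β
      rw [xyAux_entry_formula n hn A hA i j β, xyAux_norm_sq_entry, if_pos hji,
        xyAux_norm_sq_diag n hn]
    simp only [hfun]
    rw [xyAux_integral_affine_cos n hn, if_pos hji]
    field_simp
    ring
  · have hfun : ∀ β : ℝ, ‖(NormedSpace.exp ((-(Complex.I * β)) • A)) j i‖ ^ 2 =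
        2/(n:ℝ)^2 + (-2/(n:ℝ)^2) * Real.cos ((n:ℝ)*β) := by
      intro β
      rw [xyAux_entry_formula n hn A hA i j β, xyAux_norm_sq_entry, if_neg hji,
        xyAux_norm_sq_off n hn]
    simp only [hfun]
    rw [xyAux_integral_affine_cos n hn, if_neg hji]
    field_simp
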